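/- With the notation of the previous deformation setup, the second derivative at t=0 of the pulled-back surface Jacobian in two directions ξ₁, ξ₂ (via the polarization of t ↦ J_{t(ξ₁+ξ₂)}) equals ∂²J[0; ξ₁,ξ₂] = −tr([∇_Γ ξ₂][∇_Γ ξ₁]) + (div_Γ ξ₁)(div_Γ ξ₂) + ([∇_Γ ξ₁]n · [∇_Γ ξ₂]n). -/

import Mathlib

open Real Filter Topology Matrix


lemma deriv2_sqrt_poly (c1 c2 c3 c4 : ℝ) :
    iteratedDeriv 2 (fun t : ℝ => Real.sqrt (1 + c1*t + c2*t^2 + c3*t^3 + c4*t^4)) 0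
      = c2 - c1^2/4 := by
  set P : ℝ → ℝ := fun t => 1 + c1*t + c2*t^2 + c3*t^3 + c4*t^4 with hPdef
  have hP : ∀ t : ℝ, HasDerivAt P (c1 + 2*c2*t + 3*c3*t^2 + 4*c4*t^3) t := by
    intro t
    have h := ((((hasDerivAt_const t (1:ℝ)).add ((hasDerivAt_id t).const_mul c1)).add
      ((hasDerivAt_pow 2 t).const_mul c2)).add
      ((hasDerivAt_pow 3 t).const_mul c3)).add
      ((hasDerivAt_pow 4 t).const_mul c4)
    refine h.congr_deriv ?_
    push_cast
    ring
  have hP0 : P 0 = 1 := by simp [hPdef]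
  have hpos : ∀ᶠ t in 𝓝 (0:ℝ), 0 < P t :=
    continuousAt_const.eventually_lt (hP 0).continuousAt (by rw [hP0]; norm_num)
  have hg' : deriv (fun s => Real.sqrt (P s)) =ᶠ[𝓝 (0:ℝ)]
      fun t => (c1 + 2*c2*t + 3*c3*t^2 + 4*c4*t^3) / (2 * Real.sqrt (P t)) :=
    hpos.mono fun t ht => ((hP t).sqrt ht.ne').deriv
  have hstep : iteratedDeriv 2 (fun t : ℝ => Real.sqrt (P t)) 0
      = deriv (fun t => (c1 + 2*c2*t + 3*c3*t^2 + 4*c4*t^3) / (2 * Real.sqrt (P t))) 0 := by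
    rw [iteratedDeriv_succ, iteratedDeriv_one]
    exact hg'.deriv_eq
  rw [hPdef] at hstep
  rw [hstep]
  have hN : HasDerivAt (fun t : ℝ => c1 + 2*c2*t + 3*c3*t^2 + 4*c4*t^3) (2*c2) 0 := by
    have h := (((hasDerivAt_const (0:ℝ) c1).add ((hasDerivAt_id 0).const_mul (2*c2))).add
      ((hasDerivAt_pow 2 0).const_mul (3*c3))).add
      ((hasDerivAt_pow 3 0).const_mul (4*c4))
    refine h.congr_deriv ?_
    push_cast
    ring
  have hD : HasDerivAt (fun t : ℝ => 2 * Real.sqrt (P t)) c1 0 := by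
    have h := ((hP 0).sqrt (by rw [hP0]; norm_num)).const_mul 2
    refine h.congr_deriv ?_
    rw [hP0]
    simp
    ring
  have hD0 : (2 : ℝ) * Real.sqrt (P 0) ≠ 0 := by rw [hP0]; simp
  have h := hN.div hD hD0
  rw [hPdef] at h hD0
  erw [h.deriv]
  have : Real.sqrt (1 + c1*0 + c2*0^2 + c3*0^3 + c4*0^4) = 1 := by norm_num
  simp only [this] at *
  ring


lemma key2 (ν a b : Fin 3 → ℝ) (hν : ∑ i, ν i ^ 2 = 1)
    (h1 : ∀ c1 c2 c3 c4 : ℝ,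
      iteratedDeriv 2 (fun t : ℝ => Real.sqrt (1 + c1*t + c2*t^2 + c3*t^3 + c4*t^4)) 0
      = c2 - c1^2/4) :
    iteratedDeriv 2 (fun t : ℝ => Real.sqrt (∑ i, (ν i + t * a i + t^2 * b i)^2)) 0
      = (∑ i, (a i)^2) + 2*(∑ i, ν i * b i) - (2*(∑ i, ν i * a i))^2/4 := by
  have hfun : (fun t : ℝ => Real.sqrt (∑ i, (ν i + t*a i + t^2*b i)^2))
      = fun t : ℝ => Real.sqrt (1 + (2*∑ i, ν i*a i)*t
          + ((∑ i, (a i)^2)+2*(∑ i, ν i*b i))*t^2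
          + (2*∑ i, a i*b i)*t^3 + (∑ i, (b i)^2)*t^4) := by
    funext t
    congr 1
    simp only [Fin.sum_univ_three] at hν ⊢
    linear_combination hν
  rw [hfun, h1]

lemma adj_expand (M : Matrix (Fin 3) (Fin 3) ℝ) (ν : Fin 3 → ℝ) (t : ℝ) (i : Fin 3) :
    (Matrix.adjugate (1 + t • M)).transpose.mulVec ν i
      = ν i + t * (M.trace * ν i - M.transpose.mulVec ν i)
        + t^2 * ((M.trace^2 - (M*M).trace)/2 * ν i - M.trace * (M.transpose.mulVec ν i)
                  + (M*M).transpose.mulVec ν i) := by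
  rw [Matrix.adjugate_fin_three]
  fin_cases i <;>
    simp [Matrix.mulVec, dotProduct, Fin.sum_univ_three, Matrix.transpose_apply,
      Matrix.add_apply, Matrix.smul_apply, Matrix.one_apply, Matrix.trace_fin_three,
      Matrix.mul_apply] <;> ring

set_option maxRecDepth 100000 in
set_option maxHeartbeats 2000000 in
theorem stmt7 (M₁ M₂ : Matrix (Fin 3) (Fin 3) ℝ) (ν : Fin 3 → ℝ)
    (hν : ∑ i, ν i ^ 2 = 1)
    (J : Matrix (Fin 3) (Fin 3) ℝ → ℝ → ℝ)
    (hJ : ∀ M t, J M t =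
      Real.sqrt (∑ i, ((Matrix.adjugate (1 + t • M)).transpose.mulVec ν i) ^ 2))
    (G₁ G₂ : Matrix (Fin 3) (Fin 3) ℝ)
    (hG₁ : G₁ = (1 - Matrix.vecMulVec ν ν) * M₁.transpose)
    (hG₂ : G₂ = (1 - Matrix.vecMulVec ν ν) * M₂.transpose) :
    (1 / 2 : ℝ) *
        (iteratedDeriv 2 (J (M₁ + M₂)) 0 - iteratedDeriv 2 (J M₁) 0
          - iteratedDeriv 2 (J M₂) 0)
      = -Matrix.trace (G₂ * G₁) + Matrix.trace G₁ * Matrix.trace G₂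
          + (G₁.mulVec ν ⬝ᵥ G₂.mulVec ν) := by
  have key : ∀ M : Matrix (Fin 3) (Fin 3) ℝ,
      iteratedDeriv 2 (J M) 0
        = (∑ i, ((fun i => M.trace * ν i - M.transpose.mulVec ν i) i)^2)
          + 2*(∑ i, ν i * (fun i => (M.trace^2 - (M*M).trace)/2 * ν i
              - M.trace * (M.transpose.mulVec ν i) + (M*M).transpose.mulVec ν i) i)
          - (2*(∑ i, ν i * (fun i => M.trace * ν i - M.transpose.mulVec ν i) i))^2/4 := by
    intro M
    have hfun : J M = fun t : ℝ => Real.sqrt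
        (∑ i, (ν i + t * (fun i => M.trace * ν i - M.transpose.mulVec ν i) i
          + t^2 * (fun i => (M.trace^2 - (M*M).trace)/2 * ν i
              - M.trace * (M.transpose.mulVec ν i) + (M*M).transpose.mulVec ν i) i)^2) := by
      funext t
      rw [hJ]
      congr 1
      exact Finset.sum_congr rfl fun i _ => by rw [adj_expand]
    rw [hfun]
    exact key2 ν _ _ hν deriv2_sqrt_poly
  rw [key (M₁ + M₂), key M₁, key M₂]
  subst hG₁ hG₂
  simp only [Fin.sum_univ_three] at hν
  simp (config := { maxSteps := 10000000 }) only [Matrix.trace_fin_three, Matrix.mul_apply, Matrix.mulVec, dotProduct,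
    Matrix.transpose_apply, Matrix.sub_apply, Matrix.one_apply, Matrix.vecMulVec_apply,
    Matrix.add_apply, Fin.sum_univ_three, Fin.reduceEq, reduceIte, if_true, if_false]
  set a00 := M₁ 0 0 with ha00
  set b00 := M₂ 0 0 with hb00
  set a01 := M₁ 0 1 with ha01
  set b01 := M₂ 0 1 with hb01
  set a02 := M₁ 0 2 with ha02
  set b02 := M₂ 0 2 with hb02
  set a10 := M₁ 1 0 with ha10
  set b10 := M₂ 1 0 with hb10
  set a11 := M₁ 1 1 with ha11
  set b11 := M₂ 1 1 with hb11
  set a12 := M₁ 1 2 with ha12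
  set b12 := M₂ 1 2 with hb12
  set a20 := M₁ 2 0 with ha20
  set b20 := M₂ 2 0 with hb20
  set a21 := M₁ 2 1 with ha21
  set b21 := M₂ 2 1 with hb21
  set a22 := M₁ 2 2 with ha22
  set b22 := M₂ 2 2 with hb22
  set n0 := ν 0 with hn0
  set n1 := ν 1 with hn1
  set n2 := ν 2 with hn2
  linear_combination (- a00 * b00 * n0 * n0 * n0 * n0 + a00 * b00 * n0 * n0 - a00 * b00 * n1 * n1 - a00 * b00 * n2 * n2 - a00 * b01 * n0 * n0 * n0 * n1 + a00 * b01 * n0 * n1 - a00 * b02 * n0 * n0 * n0 * n2 + a00 * b02 * n0 * n2 - a00 * b10 * n0 * n0 * n0 * n1 + a00 * b10 * n0 * n1 - a00 * b11 * n0 * n0 * n1 * n1 - a00 * b11 * n2 * n2 + a00 * b11 - a00 * b12 * n0 * n0 * n1 * n2 + a00 * b12 * n1 * n2 - a00 * b20 * n0 * n0 * n0 * n2 + a00 * b20 * n0 * n2 - a00 * b21 * n0 * n0 * n1 * n2 + a00 * b21 * n1 * n2 - a00 * b22 * n0 * n0 * n2 * n2 - a00 * b22 * n1 * n1 + a00 *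 b22 - a01 * b00 * n0 * n0 * n0 * n1 + a01 * b00 * n0 * n1 - a01 * b01 * n0 * n0 * n1 * n1 - a01 * b02 * n0 * n0 * n1 * n2 - a01 * b10 * n0 * n0 * n1 * n1 - a01 * b10 - a01 * b11 * n0 * n1 * n1 * n1 + a01 * b11 * n0 * n1 - a01 * b12 * n0 * n1 * n1 * n2 - a01 * b20 * n0 * n0 * n1 * n2 - a01 * b21 * n0 * n1 * n1 * n2 - a01 * b22 * n0 * n1 * n2 * n2 + a01 * b22 * n0 * n1 - a02 * b00 * n0 * n0 * n0 * n2 + a02 * b00 * n0 * n2 - a02 * b01 * n0 * n0 * n1 * n2 - a02 * b02 * n0 * n0 * n2 * n2 - a02 * b10 * n0 * n0 * n1 * n2 - a02 * b11 * n0 * n1 * n1 * n2 + a02 * b11 * n0 * n2 - a02 * b12 * n0 * n1 * n2 * n2 - a02 * b20 * n0 * n0 * n2 * n2 - a02 * b20 - a02 * b21 * n0 * n1 * n2 * n2 - a02 * b22 * n0 * n2 * n2 * n2 + a02 * b22 * n0 * n2 - a10 * b00 * n0 * n0 * n0 * n1 + a10 * b00 * n0 * n1 - a10 * b01 * n0 *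 n0 * n1 * n1 - a10 * b01 - a10 * b02 * n0 * n0 * n1 * n2 - a10 * b10 * n0 * n0 * n1 * n1 - a10 * b11 * n0 * n1 * n1 * n1 + a10 * b11 * n0 * n1 - a10 * b12 * n0 * n1 * n1 * n2 - a10 * b20 * n0 * n0 * n1 * n2 - a10 * b21 * n0 * n1 * n1 * n2 - a10 * b22 * n0 * n1 * n2 * n2 + a10 * b22 * n0 * n1 - a11 * b00 * n0 * n0 * n1 * n1 - a11 * b00 * n2 * n2 + a11 * b00 - a11 * b01 * n0 * n1 * n1 * n1 + a11 * b01 * n0 * n1 - a11 * b02 * n0 * n1 * n1 * n2 + a11 * b02 * n0 * n2 - a11 * b10 * n0 * n1 * n1 * n1 + a11 * b10 * n0 * n1 - a11 * b11 * n0 * n0 - a11 * b11 * n1 * n1 * n1 * n1 + a11 * b11 * n1 * n1 - a11 * b11 * n2 * n2 - a11 * b12 * n1 * n1 * n1 * n2 + a11 * b12 * n1 * n2 - a11 * b20 * n0 * n1 * n1 * n2 + a11 * b20 * n0 * n2 - a11 * b21 * n1 * n1 * n1 * n2 + a11 * b21 * n1 * n2 - a11 * b22 * n0 * n0 - a11 *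 b22 * n1 * n1 * n2 * n2 + a11 * b22 - a12 * b00 * n0 * n0 * n1 * n2 + a12 * b00 * n1 * n2 - a12 * b01 * n0 * n1 * n1 * n2 - a12 * b02 * n0 * n1 * n2 * n2 - a12 * b10 * n0 * n1 * n1 * n2 - a12 * b11 * n1 * n1 * n1 * n2 + a12 * b11 * n1 * n2 - a12 * b12 * n1 * n1 * n2 * n2 - a12 * b20 * n0 * n1 * n2 * n2 - a12 * b21 * n1 * n1 * n2 * n2 - a12 * b21 - a12 * b22 * n1 * n2 * n2 * n2 + a12 * b22 * n1 * n2 - a20 * b00 * n0 * n0 * n0 * n2 + a20 * b00 * n0 * n2 - a20 * b01 * n0 * n0 * n1 * n2 - a20 * b02 * n0 * n0 * n2 * n2 - a20 * b02 - a20 * b10 * n0 * n0 * n1 * n2 - a20 * b11 * n0 * n1 * n1 * n2 + a20 * b11 * n0 * n2 - a20 * b12 * n0 * n1 * n2 * n2 - a20 * b20 * n0 * n0 * n2 * n2 - a20 * b21 * n0 * n1 * n2 * n2 - a20 * b22 * n0 * n2 * n2 * n2 + a20 * b22 * n0 * n2 - a21 * b00 * n0 * n0 * n1 * n2 + a21 *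 b00 * n1 * n2 - a21 * b01 * n0 * n1 * n1 * n2 - a21 * b02 * n0 * n1 * n2 * n2 - a21 * b10 * n0 * n1 * n1 * n2 - a21 * b11 * n1 * n1 * n1 * n2 + a21 * b11 * n1 * n2 - a21 * b12 * n1 * n1 * n2 * n2 - a21 * b12 - a21 * b20 * n0 * n1 * n2 * n2 - a21 * b21 * n1 * n1 * n2 * n2 - a21 * b22 * n1 * n2 * n2 * n2 + a21 * b22 * n1 * n2 - a22 * b00 * n0 * n0 * n2 * n2 - a22 * b00 * n1 * n1 + a22 * b00 - a22 * b01 * n0 * n1 * n2 * n2 + a22 * b01 * n0 * n1 - a22 * b02 * n0 * n2 * n2 * n2 + a22 * b02 * n0 * n2 - a22 * b10 * n0 * n1 * n2 * n2 + a22 * b10 * n0 * n1 - a22 * b11 * n0 * n0 - a22 * b11 * n1 * n1 * n2 * n2 + a22 * b11 - a22 * b12 * n1 * n2 * n2 * n2 + a22 * b12 * n1 * n2 - a22 * b20 * n0 * n2 * n2 * n2 + a22 * b20 * n0 * n2 - a22 * b21 * n1 * n2 * n2 * n2 + a22 * b21 * n1 * n2 - a22 * b22 * n0 * n0 - a22 *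 b22 * n1 * n1 - a22 * b22 * n2 * n2 * n2 * n2 + a22 * b22 * n2 * n2) * hν
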